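/- Let Γ = Cay(V, S) be a cubelike graph on V = 𝔽₂^m with 0 ∉ S, let a, b, c, d ∈ V with a + b ∈ S, c + d ∈ S, b ≠ c, a ≠ d, and fix any x₀ ∈ Ω₊. Then Γ has PEST from the edge (a,b) to the edge (c,d) at some time t > 0 if and only if both of the following hold: (1) a + b + c + d = 0; (2) there is an integer ρ such that v₂(λ_{x₀} − λ_x) = ρ for every x ∈ Ω₋, and v₂(λ_{x₀} − λ_y) ≥ ρ + 1 for every y ∈ Ω₊. -/

import Mathlib

open Matrix Finset

noncomputable section

/-- The adjacency matrix of the Cayley (cubelike) graph `Cay(G, S)`. -/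
def adjMatrix {G : Type*} [AddCommGroup G] [Fintype G] [DecidableEq G]
    (S : Finset G) : Matrix G G ℂ :=
  fun u v => if u + v ∈ S then 1 else 0

/-- The transfer matrix `H(t) = exp(i t A)`. -/
def transferMatrix {G : Type*} [AddCommGroup G] [Fintype G] [DecidableEq G]
    (S : Finset G) (t : ℝ) : Matrix G G ℂ :=
  NormedSpace.exp (Complex.I • ((t : ℂ) • adjMatrix S))

/-- The standard basis vector `e_a` of `ℂ^V`. -/
def stdBasis {G : Type*} [DecidableEq G] (a : G) : G → ℂ :=
  fun v => if v = a then 1 else 0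

/-- Perfect edge state transfer from the edge `(a,b)` to the edge `(c,d)` at time `t`:
`|(1/2)(e_c - e_d)ᵀ H(t)(e_a - e_b)|² = 1`. -/
def hasPEST {G : Type*} [AddCommGroup G] [Fintype G] [DecidableEq G]
    (S : Finset G) (a b c d : G) (t : ℝ) : Prop :=
  ‖(1 / 2 : ℂ) * dotProduct (stdBasis c - stdBasis d)
      (transferMatrix S t *ᵥ (stdBasis a - stdBasis b))‖ ^ 2 = 1

/-- The eigenvalue `λ_x = ∑_{s ∈ S} (-1)^{x·s}` of a cubelike graph. -/
def lam {m : ℕ} (S : Finset (Fin m → ZMod 2)) (x : Fin m → ZMod 2) : ℤ :=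
  ∑ s ∈ S, (-1) ^ (x ⬝ᵥ s).val

/-- The 2-adic valuation of an integer, with `v₂(0) = ∞`. -/
def v2 (n : ℤ) : WithTop ℤ :=
  if n = 0 then ⊤ else ((padicValInt 2 n : ℤ) : WithTop ℤ)

variable {m : ℕ}

abbrev V (m : ℕ) := Fin m → ZMod 2

/-- sign character with values in ℂ -/
def sg {m : ℕ} (w x : V m) : ℂ := (-1 : ℂ) ^ ((w ⬝ᵥ x) : ZMod 2).val

lemma neg_one_pow_val_add (z z' : ZMod 2) :
    (-1 : ℂ) ^ (z + z').val = (-1 : ℂ) ^ z.val * (-1 : ℂ) ^ z'.val := by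
  have h2 : ((2 : ZMod 2)).val = 0 := rfl
  have h1 : ((1 : ZMod 2)).val = 1 := rfl
  rw [ZMod.val_add, ← neg_one_pow_eq_pow_mod_two, pow_add]

lemma sg_add (w w' x : V m) : sg (w + w') x = sg w x * sg w' x := by
  unfold sg
  rw [add_dotProduct, neg_one_pow_val_add]

lemma sg_add_right (w x y : V m) : sg w (x + y) = sg w x * sg w y := by
  unfold sg
  rw [dotProduct_add, neg_one_pow_val_add]

lemma sg_zero (x : V m) : sg 0 x = 1 := by unfold sg; simp

lemma sg_mul_self (w x : V m) : sg w x * sg w x = 1 := by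
  unfold sg
  rw [← pow_add, ← two_mul, pow_mul]
  norm_num

lemma sg_comm (w x : V m) : sg w x = sg x w := by
  unfold sg; rw [dotProduct_comm]

/-- orthogonality: the full character sum -/
lemma sum_sg (w : V m) : ∑ x : V m, sg w x = if w = 0 then (2 : ℂ) ^ m else 0 := by
  split_ifs with h
  · subst h
    simp [sg_zero, Finset.card_univ]
  · -- pick j with w j ≠ 0
    obtain ⟨j, hj⟩ : ∃ j, w j ≠ 0 := by
      by_contra hc
      push_neg at hc
      exact h (funext hc)
    have hj1 : w j = 1 := by
      have h01 : ∀ z : ZMod 2, z = 0 ∨ z = 1 := by decide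
      rcases h01 (w j) with h' | h'
      · exact absurd h' hj
      · exact h'
    have h1 : ((1 : ZMod 2)).val = 1 := rfl
    apply Finset.sum_ninvolution (fun x => x + Pi.single j (1 : ZMod 2))
    · intro x
      have hdot : w ⬝ᵥ (x + Pi.single j 1) = w ⬝ᵥ x + 1 := by
        rw [dotProduct_add, dotProduct_single, hj1, mul_one]
      show sg w x + sg w (x + Pi.single j 1) = 0
      unfold sg
      rw [hdot, neg_one_pow_val_add, h1]
      ring
    · intro x _
      intro hx
      have hps : x + Pi.single j (1 : ZMod 2) = x + 0 := by rw [add_zero]; exact hx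
      have h0 : Pi.single j (1 : ZMod 2) = (0 : V m) := add_left_cancel hps
      have := congrFun h0 j
      simp at this
    · intro x; exact Finset.mem_univ _
    · intro x
      ext k
      by_cases hk : k = j <;>
        simp [hk, CharTwo.add_self_eq_zero, add_assoc]

lemma addV_self (v : V m) : v + v = 0 := by
  ext k; exact CharTwo.add_self_eq_zero _

lemma addV_eq_zero_iff {u v : V m} : u + v = 0 ↔ u = v := by
  constructor
  · intro h
    have h2 := congrArg (· + v) h
    simp only [zero_add] at h2
    rwa [add_assoc, addV_self, add_zero] at h2
  · rintro rfl; exact addV_self u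

/-- character matrix -/
def Pm (m : ℕ) : Matrix (V m) (V m) ℂ := Matrix.of fun u x => sg u x

lemma sum_sg_lam (S : Finset (V m)) (x : V m) :
    ∑ s ∈ S, sg s x = ((lam S x : ℤ) : ℂ) := by
  unfold lam sg
  push_cast
  refine Finset.sum_congr rfl fun s _ => ?_
  rw [dotProduct_comm]

lemma Pm_mul_Pm : Pm m * Pm m = ((2 : ℂ) ^ m) • 1 := by
  ext u v
  simp only [Matrix.mul_apply, Pm, Matrix.of_apply, Matrix.smul_apply, Matrix.one_apply,
    smul_eq_mul]
  calc ∑ x, sg u x * sg x v = ∑ x, sg (u + v) x := by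
        refine Finset.sum_congr rfl fun x _ => ?_
        rw [sg_comm x v, ← sg_add]
      _ = if u + v = 0 then (2 : ℂ) ^ m else 0 := sum_sg _
      _ = 2 ^ m * (if u = v then 1 else 0) := by
        simp only [addV_eq_zero_iff]
        split_ifs <;> simp

lemma two_pow_ne (m : ℕ) : ((2:ℂ) ^ m) ≠ 0 := pow_ne_zero _ two_ne_zero

lemma Pm_inv_right : Pm m * (((2:ℂ) ^ m)⁻¹ • Pm m) = 1 := by
  rw [Matrix.mul_smul, Pm_mul_Pm, smul_smul, inv_mul_cancel₀ (two_pow_ne m), one_smul]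

lemma Pm_inv_left : (((2:ℂ) ^ m)⁻¹ • Pm m) * Pm m = 1 := by
  rw [Matrix.smul_mul, Pm_mul_Pm, smul_smul, inv_mul_cancel₀ (two_pow_ne m), one_smul]

def Pu (m : ℕ) : (Matrix (V m) (V m) ℂ)ˣ where
  val := Pm m
  inv := ((2:ℂ) ^ m)⁻¹ • Pm m
  val_inv := Pm_inv_right
  inv_val := Pm_inv_left

lemma adj_mul_Pm (S : Finset (V m)) :
    adjMatrix S * Pm m = Pm m * Matrix.diagonal (fun x => ((lam S x : ℤ) : ℂ)) := by
  ext u x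
  rw [Matrix.mul_apply, Matrix.mul_diagonal]
  simp only [adjMatrix, Pm, Matrix.of_apply]
  calc ∑ v, (if u + v ∈ S then (1:ℂ) else 0) * sg v x
      = ∑ w, (if u + (u + w) ∈ S then (1:ℂ) else 0) * sg (u + w) x := by
        exact (Fintype.sum_equiv (Equiv.addLeft u) _ _ (fun w => rfl)).symm
    _ = ∑ w, (if w ∈ S then (1:ℂ) else 0) * (sg u x * sg w x) := by
        refine Finset.sum_congr rfl fun w _ => ?_
        rw [← add_assoc, addV_self, zero_add, sg_add]
    _ = ∑ w ∈ S, sg u x * sg w x := by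
        simp only [ite_mul, one_mul, zero_mul]
        rw [Finset.sum_ite_mem, Finset.univ_inter]
    _ = sg u x * ((lam S x : ℤ) : ℂ) := by rw [← Finset.mul_sum, sum_sg_lam]

lemma transferMatrix_eq (S : Finset (V m)) (t : ℝ) :
    transferMatrix S t =
      ((2:ℂ) ^ m)⁻¹ •
        (Pm m * Matrix.diagonal (fun x => Complex.exp (Complex.I * t * ((lam S x : ℤ) : ℂ)))
          * Pm m) := by
  set Dt : Matrix (V m) (V m) ℂ :=
    Matrix.diagonal (fun x => Complex.I * t * ((lam S x : ℤ) : ℂ)) with hDt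
  have hval : (↑(Pu m) : Matrix (V m) (V m) ℂ) = Pm m := rfl
  have hinv : (↑(Pu m)⁻¹ : Matrix (V m) (V m) ℂ) = ((2:ℂ) ^ m)⁻¹ • Pm m := rfl
  have hd : Complex.I • ((t:ℂ) • Matrix.diagonal (fun x => ((lam S x : ℤ) : ℂ))) = Dt := by
    ext i k
    simp only [hDt, Matrix.smul_apply, Matrix.diagonal_apply, smul_eq_mul]
    rw [mul_ite, mul_ite]
    split_ifs <;> ring
  have h1 : Complex.I • ((t : ℂ) • adjMatrix S) * Pm m = Pm m * Dt := by
    rw [Matrix.smul_mul, Matrix.smul_mul, adj_mul_Pm, ← Matrix.mul_smul, ← Matrix.mul_smul, hd]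
  have key : Complex.I • ((t : ℂ) • adjMatrix S)
      = (Pu m : Matrix (V m) (V m) ℂ) * Dt * (↑(Pu m)⁻¹ : Matrix (V m) (V m) ℂ) := by
    rw [hval, hinv]
    calc Complex.I • ((t : ℂ) • adjMatrix S)
        = Complex.I • ((t : ℂ) • adjMatrix S) * (Pm m * (((2:ℂ) ^ m)⁻¹ • Pm m)) := by
          rw [Pm_inv_right, mul_one]
      _ = (Complex.I • ((t : ℂ) • adjMatrix S) * Pm m) * (((2:ℂ) ^ m)⁻¹ • Pm m) := by
          rw [mul_assoc]
      _ = Pm m * Dt * (((2:ℂ) ^ m)⁻¹ • Pm m) := by rw [h1]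
  rw [transferMatrix, key, Matrix.exp_units_conj, hval, hinv]
  have hdiag : NormedSpace.exp Dt
      = Matrix.diagonal (fun x => Complex.exp (Complex.I * t * ((lam S x : ℤ) : ℂ))) := by
    rw [hDt, Matrix.exp_diagonal]
    congr 1
    rw [Pi.exp_def]
    funext x
    rw [← Complex.exp_eq_exp_ℂ]
  rw [hdiag, Matrix.mul_smul]

lemma transferMatrix_apply (S : Finset (V m)) (t : ℝ) (u v : V m) :
    transferMatrix S t u v =
      ((2:ℂ) ^ m)⁻¹ * ∑ x : V m, Complex.exp (Complex.I * t * ((lam S x : ℤ) : ℂ)) * sg (u + v) x := by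
  rw [transferMatrix_eq]
  rw [Matrix.smul_apply, smul_eq_mul]
  congr 1
  rw [Matrix.mul_apply]
  refine Finset.sum_congr rfl fun x _ => ?_
  rw [Matrix.mul_diagonal]
  simp only [Pm, Matrix.of_apply]
  rw [sg_add, sg_comm x v]
  ring

lemma mulVec_std (H : Matrix (V m) (V m) ℂ) (a u : V m) :
    (H *ᵥ stdBasis a) u = H u a := by
  simp [Matrix.mulVec, dotProduct, _root_.stdBasis, mul_ite]

lemma dot_std (w : V m → ℂ) (c : V m) : dotProduct (stdBasis c) w = w c := by
  simp [dotProduct, _root_.stdBasis, ite_mul]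

lemma amp_eq (S : Finset (V m)) (t : ℝ) (a b c d : V m) :
    (1 / 2 : ℂ) * dotProduct (stdBasis c - stdBasis d)
      (transferMatrix S t *ᵥ (stdBasis a - stdBasis b)) =
    ((2:ℂ) ^ (m+1))⁻¹ * ∑ x : V m, Complex.exp (Complex.I * t * ((lam S x : ℤ) : ℂ)) *
      (sg (c+a) x + sg (d+b) x - sg (c+b) x - sg (d+a) x) := by
  have hmv : transferMatrix S t *ᵥ (stdBasis a - stdBasis b)
      = (transferMatrix S t *ᵥ stdBasis a) - (transferMatrix S t *ᵥ stdBasis b) := by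
    rw [Matrix.mulVec_sub]
  rw [hmv, sub_dotProduct, dotProduct_sub, dotProduct_sub,
    dot_std, dot_std, dot_std, dot_std]
  simp only [Pi.sub_apply, mulVec_std]
  rw [transferMatrix_apply, transferMatrix_apply, transferMatrix_apply, transferMatrix_apply]
  have hc : ∑ x : V m, Complex.exp (Complex.I * t * ((lam S x : ℤ) : ℂ)) *
      (sg (c+a) x + sg (d+b) x - sg (c+b) x - sg (d+a) x)
      = ((∑ x : V m, Complex.exp (Complex.I * t * ((lam S x : ℤ) : ℂ)) * sg (c+a) x)
        + (∑ x : V m, Complex.exp (Complex.I * t * ((lam S x : ℤ) : ℂ)) * sg (d+b) x))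
        - (∑ x : V m, Complex.exp (Complex.I * t * ((lam S x : ℤ) : ℂ)) * sg (c+b) x)
        - (∑ x : V m, Complex.exp (Complex.I * t * ((lam S x : ℤ) : ℂ)) * sg (d+a) x) := by
    rw [← Finset.sum_add_distrib, ← Finset.sum_sub_distrib, ← Finset.sum_sub_distrib]
    exact Finset.sum_congr rfl fun x _ => by ring
  rw [hc, pow_succ]
  have h2 : ((2:ℂ) ^ m * 2)⁻¹ = (2:ℂ)⁻¹ * ((2:ℂ)^m)⁻¹ := by
    rw [mul_inv]; ring
  rw [h2]
  field_simp
  ring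

lemma zmod2_cases (z : ZMod 2) : z = 0 ∨ z = 1 := by
  revert z; decide

lemma sg_eq_one {w x : V m} (h : w ⬝ᵥ x = 0) : sg w x = 1 := by
  unfold sg; rw [h]; norm_num [ZMod.val_zero]

lemma sg_eq_neg_one {w x : V m} (h : w ⬝ᵥ x = 1) : sg w x = -1 := by
  unfold sg; rw [h]
  norm_num [show ((1 : ZMod 2)).val = 1 from rfl]

lemma char_two_rearrange :
    ∀ w x y z : ZMod 2, w + x + y + z = 0 →
      z + x = y + w ∧ y + x = (y + w) + (w + x) ∧ z + w = (y + w) + (w + x) := by decide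

lemma e0_rearrange {a b c d : V m} (he : a + b + c + d = 0) :
    d + b = c + a ∧ c + b = (c + a) + (a + b) ∧ d + a = (c + a) + (a + b) := by
  have h := fun k => char_two_rearrange (a k) (b k) (c k) (d k) (congrFun he k)
  refine ⟨funext fun k => (h k).1, funext fun k => (h k).2.1, funext fun k => (h k).2.2⟩

/-- the half-space index set -/
def Om (w : V m) : Finset (V m) := Finset.univ.filter (fun x => w ⬝ᵥ x = 1)

lemma filter_not_eq_Om (w : V m) :
    Finset.univ.filter (fun x : V m => ¬ w ⬝ᵥ x = 0) = Om w := by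
  unfold Om
  apply Finset.filter_congr
  intro x _
  rcases zmod2_cases (w ⬝ᵥ x) with h | h <;> simp [h]

lemma mem_Om_dot {w x : V m} (hx : x ∈ Om w) : w ⬝ᵥ x = 1 := by
  have := (Finset.mem_filter.mp hx).2
  exact this

lemma card_Om (hm : 1 ≤ m) {w : V m} (hw : w ≠ 0) : (Om w).card = 2 ^ (m - 1) := by
  classical
  have hsum : ∑ x : V m, sg w x = 0 := by rw [sum_sg, if_neg hw]
  have hsplit : ∑ x : V m, sg w x
      = ((Finset.univ.filter (fun x : V m => w ⬝ᵥ x = 0)).card : ℂ)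
        - ((Om w).card : ℂ) := by
    rw [← Finset.sum_filter_add_sum_filter_not Finset.univ (fun x : V m => w ⬝ᵥ x = 0)]
    have h1 : ∑ x ∈ Finset.univ.filter (fun x : V m => w ⬝ᵥ x = 0), sg w x
        = ((Finset.univ.filter (fun x : V m => w ⬝ᵥ x = 0)).card : ℂ) := by
      rw [Finset.sum_congr rfl (fun x hx => sg_eq_one (Finset.mem_filter.mp hx).2)]
      simp
    have h2 : ∑ x ∈ Finset.univ.filter (fun x : V m => ¬ w ⬝ᵥ x = 0), sg w x
        = -((Om w).card : ℂ) := by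
      rw [filter_not_eq_Om]
      rw [Finset.sum_congr rfl (fun x hx => sg_eq_neg_one (mem_Om_dot hx))]
      simp
    rw [h1, h2]
    ring
  have hcards : (Finset.univ.filter (fun x : V m => w ⬝ᵥ x = 0)).card = (Om w).card := by
    have := hsplit.symm.trans hsum
    have h' : (((Finset.univ.filter (fun x : V m => w ⬝ᵥ x = 0)).card : ℂ)) = ((Om w).card : ℂ) := by
      linear_combination this
    exact_mod_cast h'
  have htot : (Finset.univ.filter (fun x : V m => w ⬝ᵥ x = 0)).card + (Om w).card = 2 ^ m := by
    have := Finset.card_filter_add_card_filter_not (s := (Finset.univ : Finset (V m)))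
      (p := fun x : V m => w ⬝ᵥ x = 0)
    rw [Finset.card_univ] at this
    have hcv : Fintype.card (V m) = 2 ^ m := by
      simp [Fintype.card_fun]
    rw [hcv, filter_not_eq_Om] at this
    exact this
  rw [hcards, ← two_mul] at htot
  have hm' : 2 ^ m = 2 * 2 ^ (m - 1) := by
    rw [← pow_succ']
    congr 1
    omega
  omega

lemma amp_e0 (hm : 1 ≤ m) (S : Finset (V m)) (t : ℝ) (a b c d : V m)
    (he : a + b + c + d = 0) :
    (1 / 2 : ℂ) * dotProduct (stdBasis c - stdBasis d)
      (transferMatrix S t *ᵥ (stdBasis a - stdBasis b)) =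
    ((2:ℂ) ^ (m-1))⁻¹ * ∑ x ∈ Om (b + a),
      Complex.exp (Complex.I * t * ((lam S x : ℤ) : ℂ)) * sg (c + a) x := by
  obtain ⟨h1, h2, h3⟩ := e0_rearrange he
  rw [amp_eq, h1, h2, h3]
  have hbr : ∀ x : V m, sg (c+a) x + sg (c+a) x - sg ((c+a)+(a+b)) x - sg ((c+a)+(a+b)) x
      = 2 * sg (c+a) x * (1 - sg (a+b) x) := by
    intro x
    rw [sg_add (c+a) (a+b) x]
    ring
  rw [Finset.sum_congr rfl (fun x _ => by rw [hbr x])]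
  -- split the sum according to (a+b) ⬝ᵥ x
  rw [← Finset.sum_filter_add_sum_filter_not Finset.univ (fun x : V m => (a+b) ⬝ᵥ x = 0)]
  have hz : ∑ x ∈ Finset.univ.filter (fun x : V m => (a+b) ⬝ᵥ x = 0),
      Complex.exp (Complex.I * t * ((lam S x : ℤ) : ℂ)) * (2 * sg (c+a) x * (1 - sg (a+b) x)) = 0 := by
    apply Finset.sum_eq_zero
    intro x hx
    rw [sg_eq_one (Finset.mem_filter.mp hx).2]
    ring
  have hOm : Finset.univ.filter (fun x : V m => ¬ (a+b) ⬝ᵥ x = 0) = Om (b + a) := by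
    rw [add_comm b a]
    exact filter_not_eq_Om (a + b)
  rw [hz, zero_add, hOm]
  rw [Finset.mul_sum, Finset.mul_sum]
  apply Finset.sum_congr rfl
  intro x hx
  have hx1 : (a+b) ⬝ᵥ x = 1 := by
    rw [add_comm a b]
    exact mem_Om_dot hx
  rw [sg_eq_neg_one hx1]
  have hpow : ((2:ℂ) ^ (m+1)) = (2:ℂ)^(m-1) * 4 := by
    have : m + 1 = (m - 1) + 2 := by omega
    rw [this, pow_add]
    norm_num
  rw [hpow, mul_inv]
  norm_num
  ring

/-- real-valued sign character -/
def rsg {m : ℕ} (w x : V m) : ℝ := (-1 : ℝ) ^ ((w ⬝ᵥ x) : ZMod 2).val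

lemma sg_eq_rsg (w x : V m) : sg w x = ((rsg w x : ℝ) : ℂ) := by
  unfold sg rsg; norm_cast

lemma rsg_add (w w' x : V m) : rsg (w + w') x = rsg w x * rsg w' x := by
  have := sg_add w w' x
  rw [sg_eq_rsg, sg_eq_rsg, sg_eq_rsg, ← Complex.ofReal_mul] at this
  exact_mod_cast this

lemma rsg_mul_self (w x : V m) : rsg w x * rsg w x = 1 := by
  have := sg_mul_self w x
  rw [sg_eq_rsg, ← Complex.ofReal_mul] at this
  exact_mod_cast this

lemma rsg_zero_right (w : V m) : rsg w 0 = 1 := by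
  unfold rsg
  rw [dotProduct_zero]
  norm_num [ZMod.val_zero]

lemma sum_rsg (w : V m) : ∑ x : V m, rsg w x = if w = 0 then (2 : ℝ) ^ m else 0 := by
  have := sum_sg w
  have hc : ((∑ x : V m, rsg w x : ℝ) : ℂ) = ∑ x : V m, sg w x := by
    push_cast
    exact Finset.sum_congr rfl fun x _ => (sg_eq_rsg w x).symm
  rw [this] at hc
  split_ifs at hc ⊢ with h
  · exact_mod_cast hc
  · exact_mod_cast hc

lemma abs_exp_Itn (t : ℝ) (n : ℤ) : ‖Complex.exp (Complex.I * t * (n : ℂ))‖ = 1 := by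
  rw [Complex.norm_exp]
  have : (Complex.I * t * (n : ℂ)).re = 0 := by simp
  rw [this, Real.exp_zero]

def brR {m : ℕ} (w1 w2 w3 w4 : V m) (x : V m) : ℝ :=
  rsg w1 x + rsg w2 x - rsg w3 x - rsg w4 x

/-- the strict bound in the case `a+b+c+d ≠ 0` -/
lemma sum_abs_br_lt (w1 w2 w3 w4 : V m)
    (h12 : w1 ≠ w2) (h13 : w1 ≠ w3) (h14 : w1 ≠ w4)
    (h23 : w2 ≠ w3) (h24 : w2 ≠ w4) (h34 : w3 ≠ w4) :
    ∑ x : V m, |brR w1 w2 w3 w4 x| ≤ 2 ^ (m+1) - 1 := by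
  set B : V m → ℝ := brR w1 w2 w3 w4 with hB
  have hBx : ∀ x, B x = rsg w1 x + rsg w2 x - rsg w3 x - rsg w4 x := fun x => rfl
  have hsq : ∀ x : V m, B x ^ 2 = 4 + 2 * (rsg (w1+w2) x + rsg (w3+w4) x
      - rsg (w1+w3) x - rsg (w1+w4) x - rsg (w2+w3) x - rsg (w2+w4) x) := by
    intro x
    have e11 := rsg_mul_self w1 x
    have e22 := rsg_mul_self w2 x
    have e33 := rsg_mul_self w3 x
    have e44 := rsg_mul_self w4 x
    have e12 := rsg_add w1 w2 x
    have e13 := rsg_add w1 w3 x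
    have e14 := rsg_add w1 w4 x
    have e23 := rsg_add w2 w3 x
    have e24 := rsg_add w2 w4 x
    have e34 := rsg_add w3 w4 x
    rw [hBx]
    linear_combination e11 + e22 + e33 + e44 - 2*e12 - 2*e34 + 2*e13 + 2*e14 + 2*e23 + 2*e24
  have hsum_ne : ∀ w w' : V m, w ≠ w' → ∑ x : V m, rsg (w + w') x = 0 := by
    intro w w' hne
    rw [sum_rsg, if_neg]
    rw [Ne, addV_eq_zero_iff] at *
    exact hne
  have hsumsq : ∑ x : V m, B x ^ 2 = 4 * 2 ^ m := by
    rw [Finset.sum_congr rfl fun x _ => hsq x]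
    rw [Finset.sum_add_distrib]
    have hz : ∑ x : V m, 2 * (rsg (w1+w2) x + rsg (w3+w4) x
        - rsg (w1+w3) x - rsg (w1+w4) x - rsg (w2+w3) x - rsg (w2+w4) x) = 0 := by
      rw [← Finset.mul_sum]
      have : ∑ x : V m, (rsg (w1+w2) x + rsg (w3+w4) x
          - rsg (w1+w3) x - rsg (w1+w4) x - rsg (w2+w3) x - rsg (w2+w4) x)
          = (∑ x : V m, rsg (w1+w2) x) + (∑ x : V m, rsg (w3+w4) x)
            - (∑ x : V m, rsg (w1+w3) x) - (∑ x : V m, rsg (w1+w4) x)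
            - (∑ x : V m, rsg (w2+w3) x) - (∑ x : V m, rsg (w2+w4) x) := by
        rw [← Finset.sum_add_distrib, ← Finset.sum_sub_distrib, ← Finset.sum_sub_distrib,
          ← Finset.sum_sub_distrib, ← Finset.sum_sub_distrib]
      rw [this, hsum_ne _ _ h12, hsum_ne _ _ h34, hsum_ne _ _ h13, hsum_ne _ _ h14,
        hsum_ne _ _ h23, hsum_ne _ _ h24]
      ring
    rw [hz, add_zero]
    simp [Finset.card_univ, Fintype.card_fun]
    ring
  have hpt : ∀ x : V m, |B x| ≤ B x ^ 2 / 4 + 1 := by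
    intro x
    have h1 : |B x| ^ 2 = B x ^ 2 := sq_abs _
    nlinarith [sq_nonneg (|B x| - 2)]
  have hbr0 : B 0 = 0 := by
    rw [hBx]
    simp only [rsg_zero_right]
    ring
  have h0mem : (0 : V m) ∈ (Finset.univ : Finset (V m)) := Finset.mem_univ _
  have hone : (1:ℕ) ≤ 2 ^ m := Nat.one_le_two_pow
  have hsplit := Finset.add_sum_erase (Finset.univ : Finset (V m)) (fun x => |B x|) h0mem
  have hsplit2 := Finset.add_sum_erase (Finset.univ : Finset (V m)) (fun x => B x ^ 2) h0mem
  simp only [hbr0, abs_zero, zero_add, zero_pow, OfNat.ofNat_ne_zero, ne_eq,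
    not_false_eq_true] at hsplit hsplit2
  have hsq_erase : ∑ x ∈ Finset.univ.erase (0 : V m), B x ^ 2 = 4 * 2 ^ m := by
    rw [hsplit2, hsumsq]
  have hrest : ∑ x ∈ Finset.univ.erase (0 : V m), |B x|
      ≤ ∑ x ∈ Finset.univ.erase (0 : V m), (B x ^ 2 / 4 + 1) :=
    Finset.sum_le_sum fun x _ => hpt x
  have hrest2 : ∑ x ∈ Finset.univ.erase (0 : V m), (B x ^ 2 / 4 + 1)
      = (∑ x ∈ Finset.univ.erase (0 : V m), B x ^ 2) / 4 + (2 ^ m - 1) := by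
    rw [Finset.sum_add_distrib, ← Finset.sum_div]
    congr 1
    rw [Finset.sum_const, Finset.card_erase_of_mem h0mem, Finset.card_univ]
    have hcv : Fintype.card (V m) = 2 ^ m := by simp [Fintype.card_fun]
    rw [hcv, nsmul_eq_mul, Nat.cast_sub hone]
    push_cast
    ring
  have hpow : (2:ℝ) ^ (m+1) = 2 * 2 ^ m := by rw [pow_succ]; ring
  rw [← hsplit]
  rw [hrest2, hsq_erase] at hrest
  linarith

/-- equality in the triangle inequality for unit vectors: all terms are equal -/
lemma align {ι : Type*} [DecidableEq ι] (s : Finset ι) (f : ι → ℂ) (h1 : ∀ i ∈ s, ‖f i‖ = 1)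
    (h : ‖∑ i ∈ s, f i‖ = s.card) :
    ∀ i ∈ s, ∀ j ∈ s, f i = f j := by
  intro i hi j hj
  rcases eq_or_ne i j with rfl | hij
  · rfl
  -- split sum
  have hjmem : j ∈ s.erase i := Finset.mem_erase.mpr ⟨Ne.symm hij, hj⟩
  have hsum : ∑ k ∈ s, f k = f i + (f j + ∑ k ∈ (s.erase i).erase j, f k) := by
    rw [Finset.add_sum_erase _ _ hjmem, Finset.add_sum_erase _ _ hi]
  have hcard : ((s.erase i).erase j).card = s.card - 2 := by
    rw [Finset.card_erase_of_mem hjmem, Finset.card_erase_of_mem hi]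
    omega
  have hcard2 : 2 ≤ s.card := by
    have : ({i, j} : Finset ι) ⊆ s := by
      intro k hk
      rcases Finset.mem_insert.mp hk with rfl | hk
      · exact hi
      · rw [Finset.mem_singleton.mp hk]; exact hj
    calc 2 = ({i, j} : Finset ι).card := (Finset.card_pair hij).symm
      _ ≤ s.card := Finset.card_le_card this
  have hbound : (s.card : ℝ) ≤ ‖f i + f j‖ + (s.card - 2 : ℝ) := by
    have h1' : ‖∑ k ∈ s, f k‖ = s.card := by rw [h]
    have hrest : ‖∑ k ∈ (s.erase i).erase j, f k‖ ≤ (s.card - 2 : ℝ) := by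
      calc ‖∑ k ∈ (s.erase i).erase j, f k‖ ≤ ∑ k ∈ (s.erase i).erase j, ‖f k‖ :=
            norm_sum_le _ _
        _ = ((s.erase i).erase j).card := by
            rw [Finset.sum_congr rfl (fun k hk => by
              rw [h1 k (Finset.mem_of_mem_erase (Finset.mem_of_mem_erase hk))])]
            simp
        _ = (s.card - 2 : ℝ) := by
            rw [hcard, Nat.cast_sub hcard2]
            norm_num
    calc (s.card : ℝ) = ‖∑ k ∈ s, f k‖ := h1'.symm
      _ = ‖(f i + f j) + ∑ k ∈ (s.erase i).erase j, f k‖ := by rw [hsum]; ring_nf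
      _ ≤ ‖f i + f j‖ + ‖∑ k ∈ (s.erase i).erase j, f k‖ := norm_add_le _ _
      _ ≤ ‖f i + f j‖ + (s.card - 2 : ℝ) := by linarith
  have hni : ‖f i‖ = 1 := by exact h1 i hi
  have hnj : ‖f j‖ = 1 := by exact h1 j hj
  have hup : ‖f i + f j‖ ≤ 2 := by
    calc ‖f i + f j‖ ≤ ‖f i‖ + ‖f j‖ := norm_add_le _ _
      _ = 2 := by rw [hni, hnj]; norm_num
  have heq : ‖f i + f j‖ = ‖f i‖ + ‖f j‖ := by
    rw [hni, hnj]
    linarith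
  exact eq_of_norm_eq_of_norm_add_eq (by rw [hni, hnj]) heq

/-! ### exponential helpers -/

lemma exp_I_mul_eq_one_iff {r : ℝ} :
    Complex.exp (Complex.I * r) = 1 ↔ ∃ k : ℤ, r = k * (2 * Real.pi) := by
  rw [Complex.exp_eq_one_iff]
  constructor
  · rintro ⟨n, hn⟩
    refine ⟨n, ?_⟩
    have h' : ((r : ℂ)) * Complex.I = (((n : ℝ) * (2 * Real.pi) : ℝ) : ℂ) * Complex.I := by
      push_cast
      linear_combination hn
    have := mul_right_cancel₀ Complex.I_ne_zero h'
    exact_mod_cast this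
  · rintro ⟨k, hk⟩
    refine ⟨k, ?_⟩
    rw [hk]
    push_cast
    ring

lemma exp_I_mul_eq_neg_one_iff {r : ℝ} :
    Complex.exp (Complex.I * r) = -1 ↔ ∃ k : ℤ, r = (2 * k + 1) * Real.pi := by
  have hsh : ∀ z : ℂ, Complex.exp z = -1 ↔ Complex.exp (z + Real.pi * Complex.I) = 1 := by
    intro z
    rw [Complex.exp_add, Complex.exp_pi_mul_I]
    constructor
    · intro h; rw [h]; ring
    · intro h
      have : Complex.exp z * -1 * -1 = 1 * -1 := by rw [h]
      simpa using this
  rw [hsh]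
  have : Complex.I * r + Real.pi * Complex.I = Complex.I * ((r + Real.pi : ℝ) : ℂ) := by
    push_cast; ring
  rw [this, exp_I_mul_eq_one_iff]
  constructor
  · rintro ⟨n, hn⟩
    refine ⟨n - 1, ?_⟩
    have : r = n * (2 * Real.pi) - Real.pi := by linarith
    rw [this]
    push_cast
    ring
  · rintro ⟨k, hk⟩
    refine ⟨k + 1, ?_⟩
    rw [hk]
    push_cast
    ring

lemma exp_I_pi_odd {u : ℤ} (hu : Odd u) :
    Complex.exp (Complex.I * ((Real.pi * u : ℝ) : ℂ)) = -1 := by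
  rw [exp_I_mul_eq_neg_one_iff]
  obtain ⟨l, hl⟩ := hu
  exact ⟨l, by rw [hl]; push_cast; ring⟩

lemma exp_I_pi_even {u : ℤ} (hu : Even u) :
    Complex.exp (Complex.I * ((Real.pi * u : ℝ) : ℂ)) = 1 := by
  rw [exp_I_mul_eq_one_iff]
  obtain ⟨l, hl⟩ := hu
  exact ⟨l, by rw [hl]; push_cast; ring⟩

/-! ### 2-adic valuation helpers -/

lemma int_two_dvd_iff_even {n : ℤ} : (2:ℤ) ∣ n ↔ Even n := even_iff_two_dvd.symm

lemma padic2_odd {o : ℤ} (ho : Odd o) : padicValInt 2 o = 0 := by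
  apply padicValInt.eq_zero_of_not_dvd
  intro hdvd
  rw [show ((2:ℕ):ℤ) = 2 by norm_num] at hdvd
  exact (Int.not_even_iff_odd.mpr ho) (int_two_dvd_iff_even.mp hdvd)

lemma odd_ne_zero {o : ℤ} (ho : Odd o) : o ≠ 0 := by
  rintro rfl
  simp [Int.odd_iff] at ho

lemma padic2_odd_mul {o n : ℤ} (ho : Odd o) (hn : n ≠ 0) :
    padicValInt 2 (o * n) = padicValInt 2 n := by
  rw [padicValInt.mul (odd_ne_zero ho) hn, padic2_odd ho, zero_add]

lemma two_pow_dvd_iff {n : ℤ} (hn : n ≠ 0) {j : ℕ} :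
    (2:ℤ) ^ j ∣ n ↔ j ≤ padicValInt 2 n := by
  rw [show ((2:ℤ) ^ j) = ((2:ℕ):ℤ) ^ j by norm_num, padicValInt_dvd_iff]
  simp [hn]

lemma exists_odd_factor {n : ℤ} (hn : n ≠ 0) :
    ∃ u : ℤ, Odd u ∧ n = 2 ^ (padicValInt 2 n) * u := by
  have hdvd : (2:ℤ) ^ (padicValInt 2 n) ∣ n := (two_pow_dvd_iff hn).mpr le_rfl
  obtain ⟨u, hu⟩ := hdvd
  refine ⟨u, ?_, hu⟩
  rw [← Int.not_even_iff_odd, ← int_two_dvd_iff_even]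
  intro ⟨w, hw⟩
  have : (2:ℤ) ^ (padicValInt 2 n + 1) ∣ n := by
    refine ⟨w, ?_⟩
    calc n = 2 ^ (padicValInt 2 n) * u := hu
      _ = 2 ^ (padicValInt 2 n) * (2 * w) := by rw [hw]
      _ = 2 ^ (padicValInt 2 n + 1) * w := by rw [pow_succ]; ring
  rw [two_pow_dvd_iff hn] at this
  omega

lemma v2_coe_eq_iff {n : ℤ} {ρ : ℤ} :
    v2 n = (ρ : WithTop ℤ) ↔ n ≠ 0 ∧ ρ = (padicValInt 2 n : ℤ) := by
  unfold v2
  split_ifs with h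
  · constructor
    · intro hh
      exact absurd hh.symm WithTop.coe_ne_top
    · rintro ⟨hn, -⟩
      exact absurd h hn
  · constructor
    · intro hh
      exact ⟨h, (WithTop.coe_injective hh).symm⟩
    · rintro ⟨-, hh⟩
      rw [hh]

lemma le_v2_iff {n : ℤ} {k : ℤ} :
    (k : WithTop ℤ) ≤ v2 n ↔ (n = 0 ∨ k ≤ (padicValInt 2 n : ℤ)) := by
  unfold v2
  split_ifs with h
  · simp [h]
  · simp only [h, false_or]
    exact_mod_cast WithTop.coe_le_coe

lemma abs_sg (w x : V m) : ‖sg w x‖ = 1 := by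
  unfold sg
  rcases zmod2_cases (w ⬝ᵥ x) with h | h <;> rw [h] <;> simp [ZMod.val_zero]

lemma abs_sq_one {z : ℂ} : ‖z‖ ^ 2 = 1 ↔ ‖z‖ = 1 := by
  constructor
  · intro h
    nlinarith [norm_nonneg z]
  · intro h
    rw [h]; norm_num

lemma two_pow_m1_ne (m : ℕ) : ((2:ℂ) ^ (m-1)) ≠ 0 := pow_ne_zero _ two_ne_zero

lemma hasPEST_of_aligned (hm : 1 ≤ m) (S : Finset (V m)) (t : ℝ) (a b c d : V m)
    (he : a + b + c + d = 0) (hE0 : b + a ≠ 0) (E₀ : ℂ) (hE₀ : ‖E₀‖ = 1)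
    (h : ∀ x ∈ Om (b + a),
      Complex.exp (Complex.I * t * ((lam S x : ℤ) : ℂ)) * sg (c + a) x = E₀) :
    hasPEST S a b c d t := by
  unfold hasPEST
  rw [abs_sq_one, amp_e0 hm S t a b c d he]
  rw [Finset.sum_congr rfl h, Finset.sum_const, card_Om hm hE0, nsmul_eq_mul]
  rw [norm_mul, norm_mul, hE₀, Complex.norm_natCast, norm_inv, norm_pow,
    Complex.norm_two, mul_one]
  have h2 : ((2:ℝ) ^ (m-1)) ≠ 0 := by positivity
  push_cast
  rw [inv_mul_cancel₀ h2]

lemma aligned_of_hasPEST (hm : 1 ≤ m) (S : Finset (V m)) (t : ℝ) (a b c d : V m)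
    (he : a + b + c + d = 0) (hE0 : b + a ≠ 0)
    (hP : hasPEST S a b c d t) :
    ∀ x ∈ Om (b + a), ∀ y ∈ Om (b + a),
      Complex.exp (Complex.I * t * ((lam S x : ℤ) : ℂ)) * sg (c + a) x
        = Complex.exp (Complex.I * t * ((lam S y : ℤ) : ℂ)) * sg (c + a) y := by
  unfold hasPEST at hP
  rw [abs_sq_one, amp_e0 hm S t a b c d he, norm_mul, norm_inv, norm_pow] at hP
  simp only [Complex.norm_two] at hP
  have h2 : ((2:ℝ) ^ (m-1)) ≠ 0 := by positivity
  have habs : ‖∑ x ∈ Om (b+a),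
      Complex.exp (Complex.I * t * ((lam S x : ℤ) : ℂ)) * sg (c + a) x‖
      = ((Om (b+a)).card : ℝ) := by
    rw [card_Om hm hE0]
    push_cast
    field_simp at hP
    linarith [hP]
  exact align (Om (b+a)) _ (fun x _ => by
    rw [norm_mul, abs_exp_Itn, abs_sg, mul_one]) habs

lemma addV_cancel (u v w : V m) : (u + v) + (u + w) = v + w := by
  funext k
  have h2 : (2 : ZMod 2) = 0 := rfl
  show (u k + v k) + (u k + w k) = v k + w k
  linear_combination (u k) * h2

lemma exp_ratio (t : ℝ) (p q : ℤ) :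
    Complex.exp (Complex.I * ((t * ((p - q : ℤ) : ℝ) : ℝ) : ℂ)) *
      Complex.exp (Complex.I * t * (q : ℂ))
      = Complex.exp (Complex.I * t * (p : ℂ)) := by
  rw [← Complex.exp_add]
  congr 1
  push_cast
  ring

lemma not_hasPEST_of_ne (S : Finset (V m)) (t : ℝ) (a b c d : V m)
    (he : a + b + c + d ≠ 0) (hab0 : a + b ≠ 0) (hcd0 : c + d ≠ 0) :
    ¬ hasPEST S a b c d t := by
  intro hP
  unfold hasPEST at hP
  rw [abs_sq_one, amp_eq] at hP
  -- identify the bracket with the real bracket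
  have hbr : ∀ x : V m, sg (c+a) x + sg (d+b) x - sg (c+b) x - sg (d+a) x
      = ((brR (c+a) (d+b) (c+b) (d+a) x : ℝ) : ℂ) := by
    intro x
    unfold brR
    rw [sg_eq_rsg, sg_eq_rsg, sg_eq_rsg, sg_eq_rsg]
    push_cast
    ring
  -- distinctness
  have hne : ∀ u v : V m, u + v ≠ 0 → u ≠ v := by
    intro u v h hc
    exact h (addV_eq_zero_iff.mpr hc)
  have h12 : (c+a) ≠ (d+b) := by
    apply hne
    have : (c+a) + (d+b) = a + b + c + d := by abel
    rw [this]; exact he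
  have h34 : (c+b) ≠ (d+a) := by
    apply hne
    have : (c+b) + (d+a) = a + b + c + d := by abel
    rw [this]; exact he
  have h13 : (c+a) ≠ (c+b) := by
    apply hne
    rw [addV_cancel c a b]; exact hab0
  have h14 : (c+a) ≠ (d+a) := by
    apply hne
    rw [add_comm c a, add_comm d a, addV_cancel a c d]; exact hcd0
  have h23 : (d+b) ≠ (c+b) := by
    apply hne
    rw [add_comm d b, add_comm c b, addV_cancel b d c, add_comm d c]; exact hcd0
  have h24 : (d+b) ≠ (d+a) := by
    apply hne
    rw [addV_cancel d b a, add_comm b a]; exact hab0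
  have hsum := sum_abs_br_lt (c+a) (d+b) (c+b) (d+a) h12 h13 h14 h23 h24 h34
  -- bound the amplitude
  have habsS : ‖∑ x : V m, Complex.exp (Complex.I * t * ((lam S x : ℤ) : ℂ)) *
      (sg (c+a) x + sg (d+b) x - sg (c+b) x - sg (d+a) x)‖
      ≤ 2 ^ (m+1) - 1 := by
    calc ‖∑ x : V m, Complex.exp (Complex.I * t * ((lam S x : ℤ) : ℂ)) *
        (sg (c+a) x + sg (d+b) x - sg (c+b) x - sg (d+a) x)‖
        ≤ ∑ x : V m, ‖Complex.exp (Complex.I * t * ((lam S x : ℤ) : ℂ)) *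
          (sg (c+a) x + sg (d+b) x - sg (c+b) x - sg (d+a) x)‖ := by
          exact norm_sum_le _ _
      _ = ∑ x : V m, |brR (c+a) (d+b) (c+b) (d+a) x| := by
          refine Finset.sum_congr rfl fun x _ => ?_
          rw [hbr x, norm_mul, abs_exp_Itn, one_mul, Complex.norm_real, Real.norm_eq_abs]
      _ ≤ 2 ^ (m+1) - 1 := hsum
  rw [norm_mul, norm_inv, norm_pow, Complex.norm_two] at hP
  have hpos : (0:ℝ) < 2 ^ (m+1) := by positivity
  have : (2:ℝ) ^ (m+1) = ‖∑ x : V m, Complex.exp (Complex.I * t * ((lam S x : ℤ) : ℂ)) *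
      (sg (c+a) x + sg (d+b) x - sg (c+b) x - sg (d+a) x)‖ := by
    field_simp at hP
    linarith [hP]
  linarith [habsS, this]

/-- Main theorem: a cubelike graph has PEST between `(a,b)` and `(c,d)` at some positive
time iff `a+b+c+d = 0` and the 2-adic valuations of `λ_{x₀} - λ_x` are constant on `Ω₋`
and strictly larger on `Ω₊`. -/
theorem hasPEST_iff_valuation {m : ℕ} (hm : 1 ≤ m)
    (S : Finset (Fin m → ZMod 2)) (h0 : (0 : Fin m → ZMod 2) ∉ S)
    (a b c d : Fin m → ZMod 2) (hab : a + b ∈ S) (hcd : c + d ∈ S)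
    (hbc : b ≠ c) (had : a ≠ d)
    (x₀ : Fin m → ZMod 2) (hx₀ : (c + a) ⬝ᵥ x₀ = 0 ∧ (b + a) ⬝ᵥ x₀ = 1) :
    (∃ t : ℝ, 0 < t ∧ hasPEST S a b c d t) ↔
      a + b + c + d = 0 ∧
      ∃ ρ : ℤ,
        (∀ x : Fin m → ZMod 2, (c + a) ⬝ᵥ x = 1 → (b + a) ⬝ᵥ x = 1 →
          v2 (lam S x₀ - lam S x) = (ρ : WithTop ℤ)) ∧
        (∀ y : Fin m → ZMod 2, (c + a) ⬝ᵥ y = 0 → (b + a) ⬝ᵥ y = 1 →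
          ((ρ + 1 : ℤ) : WithTop ℤ) ≤ v2 (lam S x₀ - lam S y)) := by
  have hab0 : a + b ≠ 0 := fun h => h0 (h ▸ hab)
  have hcd0 : c + d ≠ 0 := fun h => h0 (h ▸ hcd)
  have hE0 : b + a ≠ 0 := by rw [add_comm]; exact hab0
  have hmem : ∀ {x : V m}, (b + a) ⬝ᵥ x = 1 → x ∈ Om (b + a) := by
    intro x hx
    unfold Om
    exact Finset.mem_filter.mpr ⟨Finset.mem_univ _, hx⟩
  have hπ : Real.pi ≠ 0 := Real.pi_ne_zero
  constructor
  · rintro ⟨t, ht, hP⟩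
    have he : a + b + c + d = 0 := by
      by_contra he
      exact not_hasPEST_of_ne S t a b c d he hab0 hcd0 hP
    refine ⟨he, ?_⟩
    have halign := aligned_of_hasPEST hm S t a b c d he hE0 hP
    have hx₀mem : x₀ ∈ Om (b + a) := hmem hx₀.2
    have hratio : ∀ x ∈ Om (b + a),
        Complex.exp (Complex.I * ((t * ((lam S x₀ - lam S x : ℤ) : ℝ) : ℝ) : ℂ))
          = sg (c + a) x := by
      intro x hx
      have hrel : Complex.exp (Complex.I * t * ((lam S x : ℤ) : ℂ)) * sg (c + a) x
          = Complex.exp (Complex.I * t * ((lam S x₀ : ℤ) : ℂ)) := by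
        rw [halign x hx x₀ hx₀mem, sg_eq_one hx₀.1, mul_one]
      have h1 := exp_ratio t (lam S x₀) (lam S x)
      rw [← hrel] at h1
      have h2 : Complex.exp (Complex.I * t * ((lam S x : ℤ) : ℂ)) ≠ 0 := Complex.exp_ne_zero _
      exact mul_right_cancel₀ h2 (h1.trans (mul_comm _ _))
    by_cases hex : ∃ x₁ : V m, (c + a) ⬝ᵥ x₁ = 1 ∧ (b + a) ⬝ᵥ x₁ = 1
    · obtain ⟨x₁, h1c, h1b⟩ := hex
      have h1mem : x₁ ∈ Om (b + a) := hmem h1b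
      have hminus1 : Complex.exp (Complex.I *
          ((t * ((lam S x₀ - lam S x₁ : ℤ) : ℝ) : ℝ) : ℂ)) = -1 := by
        rw [hratio x₁ h1mem, sg_eq_neg_one h1c]
      obtain ⟨o₁, ho₁⟩ := exp_I_mul_eq_neg_one_iff.mp hminus1
      have ho₁odd : Odd (2 * o₁ + 1) := ⟨o₁, by ring⟩
      have hd₁0 : (lam S x₀ - lam S x₁) ≠ 0 := by
        intro h
        rw [h] at ho₁
        simp only [Int.cast_zero, mul_zero] at ho₁
        have h2 : ((2 * o₁ + 1 : ℤ) : ℝ) * Real.pi = 0 := by push_cast; linarith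
        rcases mul_eq_zero.mp h2 with h3 | h3
        · have : (2 * o₁ + 1 : ℤ) = 0 := by exact_mod_cast h3
          omega
        · exact hπ h3
      refine ⟨(padicValInt 2 (lam S x₀ - lam S x₁) : ℤ), ?_, ?_⟩
      · intro x hxc hxb
        have hxmem : x ∈ Om (b + a) := hmem hxb
        have hminusx : Complex.exp (Complex.I *
            ((t * ((lam S x₀ - lam S x : ℤ) : ℝ) : ℝ) : ℂ)) = -1 := by
          rw [hratio x hxmem, sg_eq_neg_one hxc]
        obtain ⟨oₓ, hoₓ⟩ := exp_I_mul_eq_neg_one_iff.mp hminusx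
        have hoₓodd : Odd (2 * oₓ + 1) := ⟨oₓ, by ring⟩
        have hcross : (2 * oₓ + 1) * (lam S x₀ - lam S x₁)
            = (2 * o₁ + 1) * (lam S x₀ - lam S x) := by
          have e1 : ((2 * (oₓ : ℝ) + 1) * ((lam S x₀ - lam S x₁ : ℤ) : ℝ)) * Real.pi
              = ((2 * (o₁ : ℝ) + 1) * ((lam S x₀ - lam S x : ℤ) : ℝ)) * Real.pi := by
            linear_combination ((lam S x₀ - lam S x : ℤ) : ℝ) * ho₁
              - ((lam S x₀ - lam S x₁ : ℤ) : ℝ) * hoₓ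
          have e2 := mul_right_cancel₀ hπ e1
          exact_mod_cast e2
        have hdx0 : (lam S x₀ - lam S x) ≠ 0 := by
          intro h
          rw [h, mul_zero] at hcross
          rcases mul_eq_zero.mp hcross with h3 | h3
          · omega
          · exact hd₁0 h3
        have hvL := padic2_odd_mul hoₓodd hd₁0
        have hvR := padic2_odd_mul ho₁odd hdx0
        rw [hcross, hvR] at hvL
        rw [v2_coe_eq_iff]
        exact ⟨hdx0, by rw [hvL]⟩
      · intro y hyc hyb
        have hymem : y ∈ Om (b + a) := hmem hyb
        have hplusy : Complex.exp (Complex.I *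
            ((t * ((lam S x₀ - lam S y : ℤ) : ℝ) : ℝ) : ℂ)) = 1 := by
          rw [hratio y hymem, sg_eq_one hyc]
        obtain ⟨k, hk⟩ := exp_I_mul_eq_one_iff.mp hplusy
        have hcross : (2 * k) * (lam S x₀ - lam S x₁)
            = (2 * o₁ + 1) * (lam S x₀ - lam S y) := by
          have e1 : ((2 * (k : ℝ)) * ((lam S x₀ - lam S x₁ : ℤ) : ℝ)) * Real.pi
              = ((2 * (o₁ : ℝ) + 1) * ((lam S x₀ - lam S y : ℤ) : ℝ)) * Real.pi := by
            linear_combination ((lam S x₀ - lam S y : ℤ) : ℝ) * ho₁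
              - ((lam S x₀ - lam S x₁ : ℤ) : ℝ) * hk
          have e2 := mul_right_cancel₀ hπ e1
          exact_mod_cast e2
        rw [le_v2_iff]
        by_cases hdy : (lam S x₀ - lam S y) = 0
        · exact Or.inl hdy
        · right
          have hdvd : (2:ℤ) ^ (padicValInt 2 (lam S x₀ - lam S x₁) + 1)
              ∣ (2 * o₁ + 1) * (lam S x₀ - lam S y) := by
            rw [← hcross]
            have hd : (2:ℤ) ^ (padicValInt 2 (lam S x₀ - lam S x₁))
                ∣ (lam S x₀ - lam S x₁) := (two_pow_dvd_iff hd₁0).mpr le_rfl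
            have h2k : (2:ℤ) ∣ 2 * k := ⟨k, rfl⟩
            have hmm := mul_dvd_mul hd h2k
            rw [← pow_succ] at hmm
            have heq : (lam S x₀ - lam S x₁) * (2 * k) = 2 * k * (lam S x₀ - lam S x₁) := by
              ring
            rwa [heq] at hmm
          have hne' : (2 * o₁ + 1) * (lam S x₀ - lam S y) ≠ 0 :=
            mul_ne_zero (odd_ne_zero ho₁odd) hdy
          have hle := (two_pow_dvd_iff hne').mp hdvd
          rw [padic2_odd_mul ho₁odd hdy] at hle
          push_cast
          omega
    · push_neg at hex
      refine ⟨-1, ?_, ?_⟩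
      · intro x hxc hxb
        exact absurd hxb (hex x hxc)
      · intro y _ _
        have h01 : ((-1 : ℤ) + 1) = (0 : ℤ) := by norm_num
        rw [h01, le_v2_iff]
        right
        exact Int.natCast_nonneg _
  · rintro ⟨he, ρ, hminus, hplus⟩
    by_cases hex : ∃ x₁ : V m, (c + a) ⬝ᵥ x₁ = 1 ∧ (b + a) ⬝ᵥ x₁ = 1
    · obtain ⟨x₁, h1c, h1b⟩ := hex
      have hv₁ := hminus x₁ h1c h1b
      rw [v2_coe_eq_iff] at hv₁
      obtain ⟨hd₁0, hρ⟩ := hv₁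
      set ν : ℕ := padicValInt 2 (lam S x₀ - lam S x₁) with hν
      have h2ν : ((2:ℝ) ^ ν) ≠ 0 := by positivity
      refine ⟨Real.pi / 2 ^ ν, by positivity, ?_⟩
      apply hasPEST_of_aligned hm S _ a b c d he hE0
        (Complex.exp (Complex.I * (Real.pi / 2 ^ ν : ℝ) * ((lam S x₀ : ℤ) : ℂ)))
        (abs_exp_Itn _ _)
      intro x hx
      have hxb : (b + a) ⬝ᵥ x = 1 := mem_Om_dot hx
      have hr := exp_ratio (Real.pi / 2 ^ ν) (lam S x₀) (lam S x)
      rcases zmod2_cases ((c + a) ⬝ᵥ x) with hc0 | hc1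
      · -- Ω₊ : even multiple
        have h := hplus x hc0 hxb
        rw [le_v2_iff] at h
        have hdvd : (2:ℤ) ^ (ν + 1) ∣ (lam S x₀ - lam S x) := by
          rcases h with h | h
          · rw [h]; exact dvd_zero _
          · by_cases hdx : (lam S x₀ - lam S x) = 0
            · rw [hdx]; exact dvd_zero _
            · refine (two_pow_dvd_iff hdx).mpr ?_
              omega
        obtain ⟨w, hw⟩ := hdvd
        have hexp : Complex.exp (Complex.I *
            (((Real.pi / 2 ^ ν) * ((lam S x₀ - lam S x : ℤ) : ℝ) : ℝ) : ℂ)) = 1 := by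
          have harg : (Real.pi / 2 ^ ν) * ((lam S x₀ - lam S x : ℤ) : ℝ)
              = Real.pi * ((2 * w : ℤ) : ℝ) := by
            rw [hw, pow_succ]
            push_cast
            field_simp
          rw [harg]
          exact exp_I_pi_even ⟨w, by ring⟩
        rw [hexp, one_mul] at hr
        rw [sg_eq_one hc0, mul_one]
        exact hr
      · -- Ω₋ : odd multiple
        have h := hminus x hc1 hxb
        rw [v2_coe_eq_iff] at h
        obtain ⟨hdx0, hρx⟩ := h
        have hνx : padicValInt 2 (lam S x₀ - lam S x) = ν := by omega
        obtain ⟨u, huodd, hu⟩ := exists_odd_factor hdx0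
        rw [hνx] at hu
        have hexp : Complex.exp (Complex.I *
            (((Real.pi / 2 ^ ν) * ((lam S x₀ - lam S x : ℤ) : ℝ) : ℝ) : ℂ)) = -1 := by
          have harg : (Real.pi / 2 ^ ν) * ((lam S x₀ - lam S x : ℤ) : ℝ)
              = Real.pi * ((u : ℤ) : ℝ) := by
            rw [hu]
            push_cast
            field_simp
          rw [harg]
          exact exp_I_pi_odd huodd
        rw [hexp] at hr
        rw [sg_eq_neg_one hc1]
        rw [← hr]
        ring
    · push_neg at hex
      refine ⟨2 * Real.pi, by positivity, ?_⟩
      apply hasPEST_of_aligned hm S _ a b c d he hE0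
        (Complex.exp (Complex.I * (2 * Real.pi : ℝ) * ((lam S x₀ : ℤ) : ℂ)))
        (abs_exp_Itn _ _)
      intro x hx
      have hxb : (b + a) ⬝ᵥ x = 1 := mem_Om_dot hx
      rcases zmod2_cases ((c + a) ⬝ᵥ x) with hc0 | hc1
      · have hr := exp_ratio (2 * Real.pi) (lam S x₀) (lam S x)
        have hexp : Complex.exp (Complex.I *
            (((2 * Real.pi) * ((lam S x₀ - lam S x : ℤ) : ℝ) : ℝ) : ℂ)) = 1 := by
          have harg : (2 * Real.pi) * ((lam S x₀ - lam S x : ℤ) : ℝ)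
              = Real.pi * ((2 * (lam S x₀ - lam S x) : ℤ) : ℝ) := by
            push_cast
            ring
          rw [harg]
          exact exp_I_pi_even ⟨lam S x₀ - lam S x, by ring⟩
        rw [hexp, one_mul] at hr
        rw [sg_eq_one hc0, mul_one]
        exact hr
      · exact absurd hxb (hex x hc1)

end
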